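/- Let λ ∈ (−1/3, 0) and set b = λ − √(λ² − λ). Let N ≥ 1 and let (y_k)_{k≥0} and (l_k)_{k≥1} be sequences of vectors in ℝ^N with y_0 = 0 and y_{k+1} = λ(2y_k − y_{k−1} + l_k) for all k ≥ 1. Then for every K ≥ 1, Σ_{k=1}^{K} ‖y_k‖² ≤ (2/(1 − b²)) · ‖y_1‖² + (2λ²/(1 − |b|)²) · Σ_{s=1}^{K−1} ‖l_s‖². -/

import Mathlib

open Finset

noncomputable def auxh (p q : ℝ) : ℕ → ℝ
  | 0 => 0
  | 1 => 1
  | (n+2) => p * auxh p q (n+1) - q * auxh p q n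

lemma auxh_closed (a b : ℝ) (n : ℕ) :
    (a - b) * auxh (a + b) (a * b) n = a ^ n - b ^ n := by
  induction n using Nat.twoStepInduction with
  | zero => simp [auxh]
  | one => simp [auxh]
  | more n ih0 ih1 =>
    show (a - b) * ((a+b) * auxh (a+b) (a*b) (n+1) - (a*b) * auxh (a+b) (a*b) n) = _
    linear_combination (a + b) * ih1 - (a * b) * ih0

lemma auxh_abs_le (a b : ℝ) (ha : 0 < a) (hab : a ≤ -b) (hb : b < 0) (m : ℕ) :
    |auxh (a + b) (a * b) (m + 1)| ≤ (-b) ^ m := by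
  have hd : 0 < a - b := by linarith
  have h1 : auxh (a + b) (a * b) (m + 1) = (a ^ (m+1) - b ^ (m+1)) / (a - b) := by
    field_simp
    linear_combination auxh_closed a b (m+1)
  rw [h1, abs_div, abs_of_pos hd, div_le_iff₀ hd]
  have h2 : |a ^ (m+1) - b ^ (m+1)| ≤ a ^ (m+1) + (-b) ^ (m+1) := by
    calc |a ^ (m+1) - b ^ (m+1)| ≤ |a ^ (m+1)| + |b ^ (m+1)| := abs_sub _ _
    _ = a ^ (m+1) + (-b) ^ (m+1) := by
        rw [abs_pow, abs_pow, abs_of_pos ha, abs_of_neg hb]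
  refine h2.trans ?_
  have h3 : a ^ (m+1) ≤ a * (-b) ^ m := by
    rw [pow_succ']
    exact mul_le_mul_of_nonneg_left (pow_le_pow_left₀ ha.le hab m) ha.le
  have h4 : (-b) ^ (m+1) = (-b) * (-b) ^ m := pow_succ' (-b) m
  nlinarith [pow_nonneg (le_trans ha.le hab) m]

lemma sq_add_le_twice (u v : ℝ) : (u + v) ^ 2 ≤ 2 * u ^ 2 + 2 * v ^ 2 := by
  nlinarith [sq_nonneg (u - v)]

set_option maxHeartbeats 1000000 in
theorem stmt_10 (lam : ℝ) (hlam : lam ∈ Set.Ioo (-(1/3) : ℝ) 0)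
    (b : ℝ) (hb : b = lam - Real.sqrt (lam ^ 2 - lam))
    (N : ℕ) (hN : 1 ≤ N)
    (y : ℕ → EuclideanSpace ℝ (Fin N)) (l : ℕ → EuclideanSpace ℝ (Fin N))
    (hy0 : y 0 = 0)
    (hrec : ∀ k, 1 ≤ k → y (k + 1) = lam • ((2 : ℝ) • y k - y (k - 1) + l k))
    (K : ℕ) (hK : 1 ≤ K) :
    ∑ k ∈ Finset.Icc 1 K, ‖y k‖ ^ 2 ≤ (2 / (1 - b ^ 2)) * ‖y 1‖ ^ 2 +
      (2 * lam ^ 2 / (1 - |b|) ^ 2) * ∑ s ∈ Finset.Icc 1 (K - 1), ‖l s‖ ^ 2 := by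
  obtain ⟨hlam1, hlam2⟩ := hlam
  set r := Real.sqrt (lam ^ 2 - lam) with hr
  have hpos : (0:ℝ) < lam ^ 2 - lam := by nlinarith
  have hr2 : r ^ 2 = lam ^ 2 - lam := Real.sq_sqrt hpos.le
  have hr0 : 0 < r := Real.sqrt_pos.mpr hpos
  set a : ℝ := lam + r with ha
  have ha0 : 0 < a := by nlinarith
  have hbneg : b < 0 := by rw [hb]; nlinarith
  have hab : a ≤ -b := by rw [hb]; simp [ha]; linarith
  have hb1 : -b < 1 := by rw [hb]; nlinarith
  have hsum : a + b = 2 * lam := by rw [hb, ha]; ring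
  have hprod : a * b = lam := by rw [hb, ha]; nlinarith
  set h : ℕ → ℝ := auxh (2 * lam) lam with hhdef
  have hh0 : h 0 = 0 := rfl
  have hh1 : h 1 = 1 := rfl
  have hh2 : ∀ n, h (n + 2) = 2 * lam * h (n + 1) - lam * h n := fun n => rfl
  have key : ∀ k : ℕ, y (k + 1) = h (k + 1) • y 1 + lam • ∑ s ∈ Icc 1 k, h (k + 1 - s) • l s := by
    intro k
    induction k using Nat.twoStepInduction with
    | zero => rw [hh1]; simp
    | one =>
      have h2 := hrec 1 le_rfl
      simp only [hy0] at h2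
      rw [h2, hh2 0, hh0, hh1]
      rw [show Icc 1 1 = {1} from rfl, Finset.sum_singleton]
      norm_num [hh1]
      module
    | more n ih0 ih1 =>
      have hrw := hrec (n + 2) (by omega)
      rw [show n + 2 - 1 = n + 1 from rfl] at hrw
      rw [show n + 1 + 1 = n + 2 from by omega] at ih1
      rw [show n + 2 + 1 = n + 3 from by omega] at hrw ⊢
      have e2 : ∀ s ∈ Icc 1 (n + 1), h (n + 3 - s) • l s
          = (2 * lam) • (h (n + 2 - s) • l s) - lam • (h (n + 1 - s) • l s) := by
        intro s hs
        simp only [mem_Icc] at hs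
        rw [show n + 3 - s = (n + 1 - s) + 2 from by omega,
          show n + 2 - s = (n + 1 - s) + 1 from by omega, hh2]
        module
      have e3 : ∑ s ∈ Icc 1 (n + 1), h (n + 1 - s) • l s
          = ∑ s ∈ Icc 1 n, h (n + 1 - s) • l s := by
        rw [Finset.sum_Icc_succ_top (by omega)]
        simp [hh0]
      have e1 : ∑ s ∈ Icc 1 (n + 2), h (n + 3 - s) • l s
          = ((2 * lam) • ∑ s ∈ Icc 1 (n + 1), h (n + 2 - s) • l s
            - lam • ∑ s ∈ Icc 1 n, h (n + 1 - s) • l s) + l (n + 2) := by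
        rw [Finset.sum_Icc_succ_top (by omega), Finset.sum_congr rfl e2,
          Finset.sum_sub_distrib, ← Finset.smul_sum, ← Finset.smul_sum, ← e3,
          show n + 3 - (n + 1 + 1) = 1 from by omega, hh1, one_smul,
          show n + 1 + 1 = n + 2 from by omega]
      rw [hrw, ih1, ih0, e1, show n + 3 = (n + 1) + 2 from by omega, hh2 (n + 1),
        show n + 1 + 1 = n + 2 from by omega]
      module
  -- analytic part
  set c : ℝ := -b with hcdef
  have hc0 : 0 < c := neg_pos.mpr hbneg
  have hc1 : c < 1 := hb1
  have h1c : 0 < 1 - c := by linarith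
  have h1c2 : 0 < 1 - c ^ 2 := by nlinarith
  have habsb : |b| = c := abs_of_neg hbneg
  have habs_h : ∀ j : ℕ, |h (j + 1)| ≤ c ^ j := by
    intro j
    have t := auxh_abs_le a b ha0 hab hbneg j
    rw [hsum, hprod] at t
    exact t
  have geom : ∀ x : ℝ, 0 ≤ x → x < 1 → ∀ n : ℕ, ∑ i ∈ range n, x ^ i ≤ 1 / (1 - x) := by
    intro x hx0 hx1 n
    have h1 : 0 < 1 - x := by linarith
    induction n with
    | zero => simpa using (div_pos one_pos h1).le
    | succ n ih =>
      rw [geom_sum_succ]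
      have t1 : x * ∑ i ∈ range n, x ^ i ≤ x * (1 / (1 - x)) :=
        mul_le_mul_of_nonneg_left ih hx0
      have t2 : x * (1 / (1 - x)) + 1 = 1 / (1 - x) := by field_simp; ring
      linarith
  have hbound : ∀ m : ℕ, ‖y (m + 1)‖ ≤ c ^ m * ‖y 1‖
      + |lam| * ∑ s ∈ Icc 1 m, c ^ (m - s) * ‖l s‖ := by
    intro m
    rw [key m]
    refine (norm_add_le _ _).trans (add_le_add ?_ ?_)
    · rw [norm_smul, Real.norm_eq_abs]
      exact mul_le_mul_of_nonneg_right (habs_h m) (norm_nonneg _)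
    · rw [norm_smul, Real.norm_eq_abs]
      refine mul_le_mul_of_nonneg_left ((norm_sum_le _ _).trans ?_) (abs_nonneg lam)
      refine Finset.sum_le_sum fun s hs => ?_
      simp only [mem_Icc] at hs
      rw [norm_smul, Real.norm_eq_abs, show m + 1 - s = (m - s) + 1 from by omega]
      exact mul_le_mul_of_nonneg_right (habs_h (m - s)) (norm_nonneg _)
  have hsq : ∀ m : ℕ, ‖y (m + 1)‖ ^ 2 ≤ 2 * ‖y 1‖ ^ 2 * (c ^ 2) ^ m
      + 2 * lam ^ 2 * (∑ s ∈ Icc 1 m, c ^ (m - s) * ‖l s‖) ^ 2 := by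
    intro m
    have hbm := hbound m
    have hS : (0:ℝ) ≤ ∑ s ∈ Icc 1 m, c ^ (m - s) * ‖l s‖ :=
      Finset.sum_nonneg fun s _ => mul_nonneg (pow_nonneg hc0.le _) (norm_nonneg _)
    have hu : 0 ≤ c ^ m * ‖y 1‖ := mul_nonneg (pow_nonneg hc0.le _) (norm_nonneg _)
    have hv : 0 ≤ |lam| * ∑ s ∈ Icc 1 m, c ^ (m - s) * ‖l s‖ :=
      mul_nonneg (abs_nonneg _) hS
    have h2 : ‖y (m + 1)‖ ^ 2 ≤ (c ^ m * ‖y 1‖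
        + |lam| * ∑ s ∈ Icc 1 m, c ^ (m - s) * ‖l s‖) ^ 2 :=
      pow_le_pow_left₀ (norm_nonneg _) hbm 2
    have h3 := sq_add_le_twice (c ^ m * ‖y 1‖) (|lam| * ∑ s ∈ Icc 1 m, c ^ (m - s) * ‖l s‖)
    have h4 : (c ^ m * ‖y 1‖) ^ 2 = ‖y 1‖ ^ 2 * (c ^ 2) ^ m := by
      rw [mul_pow, ← pow_mul, ← pow_mul, mul_comm 2 m]; ring
    have h5 : (|lam| * ∑ s ∈ Icc 1 m, c ^ (m - s) * ‖l s‖) ^ 2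
        = lam ^ 2 * (∑ s ∈ Icc 1 m, c ^ (m - s) * ‖l s‖) ^ 2 := by
      rw [mul_pow, sq_abs]
    rw [h4, h5] at h3
    linarith [h2, h3]
  have expsum : ∀ m : ℕ, ∑ s ∈ Icc 1 m, c ^ (m - s) = ∑ i ∈ range m, c ^ i := by
    intro m
    induction m with
    | zero => simp
    | succ m ih =>
      rw [Finset.sum_Icc_succ_top (by omega), geom_sum_succ]
      have t : ∀ s ∈ Icc 1 m, c ^ (m + 1 - s) = c * c ^ (m - s) := by
        intro s hs
        simp only [mem_Icc] at hs
        rw [show m + 1 - s = (m - s) + 1 from by omega, pow_succ']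
      rw [Finset.sum_congr rfl t, ← Finset.mul_sum, ih]
      simp
  have CS : ∀ m : ℕ, (∑ s ∈ Icc 1 m, c ^ (m - s) * ‖l s‖) ^ 2
      ≤ (1 / (1 - c)) * ∑ s ∈ Icc 1 m, c ^ (m - s) * ‖l s‖ ^ 2 := by
    intro m
    have e : ∑ s ∈ Icc 1 m, c ^ (m - s) * ‖l s‖
        = ∑ s ∈ Icc 1 m, Real.sqrt (c ^ (m - s)) * (Real.sqrt (c ^ (m - s)) * ‖l s‖) := by
      refine Finset.sum_congr rfl fun s _ => ?_
      rw [← mul_assoc, Real.mul_self_sqrt (pow_nonneg hc0.le _)]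
    rw [e]
    refine (Finset.sum_mul_sq_le_sq_mul_sq _ _ _).trans ?_
    have e2 : ∑ s ∈ Icc 1 m, Real.sqrt (c ^ (m - s)) ^ 2 = ∑ s ∈ Icc 1 m, c ^ (m - s) :=
      Finset.sum_congr rfl fun s _ => Real.sq_sqrt (pow_nonneg hc0.le _)
    have e3 : ∑ s ∈ Icc 1 m, (Real.sqrt (c ^ (m - s)) * ‖l s‖) ^ 2
        = ∑ s ∈ Icc 1 m, c ^ (m - s) * ‖l s‖ ^ 2 :=
      Finset.sum_congr rfl fun s _ => by
        rw [mul_pow, Real.sq_sqrt (pow_nonneg hc0.le _)]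
    rw [e2, e3]
    refine mul_le_mul_of_nonneg_right ?_
      (Finset.sum_nonneg fun s _ => mul_nonneg (pow_nonneg hc0.le _) (sq_nonneg _))
    rw [expsum m]
    exact geom c hc0.le hc1 m
  -- sum over k
  have main1 : ∑ k ∈ Icc 1 K, ‖y k‖ ^ 2
      ≤ ∑ k ∈ Icc 1 K, (2 * ‖y 1‖ ^ 2 * (c ^ 2) ^ (k - 1)
        + 2 * lam ^ 2 * (∑ s ∈ Icc 1 (k - 1), c ^ (k - 1 - s) * ‖l s‖) ^ 2) := by
    refine Finset.sum_le_sum fun k hk => ?_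
    simp only [mem_Icc] at hk
    obtain ⟨m, rfl⟩ : ∃ m, k = m + 1 := ⟨k - 1, by omega⟩
    simpa using hsq m
  have partA : ∑ k ∈ Icc 1 K, (c ^ 2) ^ (k - 1) ≤ 1 / (1 - c ^ 2) := by
    rw [← Finset.Ico_add_one_right_eq_Icc, Finset.sum_Ico_eq_sum_range]
    have t : ∀ i ∈ range (K + 1 - 1), (c ^ 2) ^ (1 + i - 1) = (c ^ 2) ^ i := by
      intro i _
      congr 1
      omega
    rw [Finset.sum_congr rfl t]
    exact geom (c ^ 2) (sq_nonneg c) (by nlinarith) _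
  have fub : ∑ k ∈ Icc 1 K, ∑ s ∈ Icc 1 (k - 1), c ^ (k - 1 - s) * ‖l s‖ ^ 2
      = ∑ s ∈ Icc 1 (K - 1), ∑ k ∈ Icc (s + 1) K, c ^ (k - 1 - s) * ‖l s‖ ^ 2 := by
    refine Finset.sum_comm' fun k s => ?_
    simp only [mem_Icc]
    omega
  have inner : ∀ s : ℕ, ∑ k ∈ Icc (s + 1) K, c ^ (k - 1 - s) ≤ 1 / (1 - c) := by
    intro s
    rw [← Finset.Ico_add_one_right_eq_Icc, Finset.sum_Ico_eq_sum_range]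
    have t : ∀ i ∈ range (K + 1 - (s + 1)), c ^ (s + 1 + i - 1 - s) = c ^ i := by
      intro i _
      congr 1
      omega
    rw [Finset.sum_congr rfl t]
    exact geom c hc0.le hc1 _
  have partB : ∑ k ∈ Icc 1 K, (∑ s ∈ Icc 1 (k - 1), c ^ (k - 1 - s) * ‖l s‖) ^ 2
      ≤ (1 / (1 - c)) * ((1 / (1 - c)) * ∑ s ∈ Icc 1 (K - 1), ‖l s‖ ^ 2) := by
    calc ∑ k ∈ Icc 1 K, (∑ s ∈ Icc 1 (k - 1), c ^ (k - 1 - s) * ‖l s‖) ^ 2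
        ≤ ∑ k ∈ Icc 1 K, (1 / (1 - c)) * ∑ s ∈ Icc 1 (k - 1), c ^ (k - 1 - s) * ‖l s‖ ^ 2 :=
          Finset.sum_le_sum fun k _ => CS (k - 1)
      _ = (1 / (1 - c)) * ∑ k ∈ Icc 1 K, ∑ s ∈ Icc 1 (k - 1), c ^ (k - 1 - s) * ‖l s‖ ^ 2 := by
          rw [Finset.mul_sum]
      _ = (1 / (1 - c)) * ∑ s ∈ Icc 1 (K - 1), ∑ k ∈ Icc (s + 1) K, c ^ (k - 1 - s) * ‖l s‖ ^ 2 := by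
          rw [fub]
      _ ≤ (1 / (1 - c)) * ((1 / (1 - c)) * ∑ s ∈ Icc 1 (K - 1), ‖l s‖ ^ 2) := by
          refine mul_le_mul_of_nonneg_left ?_ (by positivity)
          rw [Finset.mul_sum]
          refine Finset.sum_le_sum fun s _ => ?_
          rw [← Finset.sum_mul]
          calc (∑ k ∈ Icc (s + 1) K, c ^ (k - 1 - s)) * ‖l s‖ ^ 2
              ≤ (1 / (1 - c)) * ‖l s‖ ^ 2 :=
                mul_le_mul_of_nonneg_right (inner s) (sq_nonneg _)
            _ = 1 / (1 - c) * ‖l s‖ ^ 2 := rfl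
  have hbb : (1:ℝ) - b ^ 2 = 1 - c ^ 2 := by rw [hcdef]; ring
  calc ∑ k ∈ Icc 1 K, ‖y k‖ ^ 2
      ≤ ∑ k ∈ Icc 1 K, (2 * ‖y 1‖ ^ 2 * (c ^ 2) ^ (k - 1)
        + 2 * lam ^ 2 * (∑ s ∈ Icc 1 (k - 1), c ^ (k - 1 - s) * ‖l s‖) ^ 2) := main1
    _ = 2 * ‖y 1‖ ^ 2 * ∑ k ∈ Icc 1 K, (c ^ 2) ^ (k - 1)
        + 2 * lam ^ 2 * ∑ k ∈ Icc 1 K, (∑ s ∈ Icc 1 (k - 1), c ^ (k - 1 - s) * ‖l s‖) ^ 2 := by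
        rw [Finset.sum_add_distrib, Finset.mul_sum, Finset.mul_sum]
    _ ≤ 2 * ‖y 1‖ ^ 2 * (1 / (1 - c ^ 2))
        + 2 * lam ^ 2 * ((1 / (1 - c)) * ((1 / (1 - c)) * ∑ s ∈ Icc 1 (K - 1), ‖l s‖ ^ 2)) := by
        gcongr
    _ = (2 / (1 - b ^ 2)) * ‖y 1‖ ^ 2
        + (2 * lam ^ 2 / (1 - |b|) ^ 2) * ∑ s ∈ Icc 1 (K - 1), ‖l s‖ ^ 2 := by
        rw [habsb, hbb]
        field_simp
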